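/- Let K = k[x₁,…,x_n] (polynomial ring), δ a k-derivation of K with δ(x_i) ∈ k·x_i + k for each i, and R = K[x; δ]. If N is a finitely generated K-module with Hilbert polynomial of degree d (with respect to a standard filtration), then the induced module N ⊗_K R has GK dimension d + 1. -/

import Mathlib

open Filter MulOpposite
open Pointwise

section helper
lemma auxGK_pow_mono {R₀ A : Type*} [CommSemiring R₀] [Semiring A] [Algebra R₀ A]
    {S T : Submodule R₀ A} (h : S ≤ T) : ∀ t, S ^ t ≤ T ^ t := by
  intro t; induction t with
  | zero => simp
  | succ t ih => rw [pow_succ, pow_succ]; exact mul_le_mul' ih h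

lemma auxGK_pow_le_pow {R₀ A : Type*} [CommSemiring R₀] [Semiring A] [Algebra R₀ A]
    {S : Submodule R₀ A} (h1 : (1 : Submodule R₀ A) ≤ S) {a b : ℕ} (hab : a ≤ b) :
    S ^ a ≤ S ^ b := by
  obtain ⟨c, rfl⟩ := Nat.exists_eq_add_of_le hab
  induction c with
  | zero => simp
  | succ c ih =>
    refine le_trans (ih (Nat.le_add_right a c)) ?_
    have : S ^ (a + c) * 1 ≤ S ^ (a + c) * S := mul_le_mul' le_rfl h1
    rw [mul_one] at this
    rw [show a + (c+1) = (a+c)+1 from rfl, pow_succ]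
    exact this
section anal
open Polynomial Asymptotics

lemma auxGK_logb_tendsto (G : ℕ → ℝ) (c C : ℝ) (hc : 0 < c) (e : ℕ)
    (h : ∀ᶠ m : ℕ in atTop, c * (m:ℝ)^(e+1) ≤ G m ∧ G m ≤ C * (m:ℝ)^(e+1)) :
    Tendsto (fun m : ℕ => Real.logb m (G m)) atTop (nhds (e+1)) := by
  have hlog : Tendsto (fun m : ℕ => Real.log m) atTop atTop :=
    Real.tendsto_log_atTop.comp tendsto_natCast_atTop_atTop
  have hlo : Tendsto (fun m : ℕ => Real.log c / Real.log m + (e+1)) atTop (nhds (0 + (e+1))) :=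
    (Tendsto.div_atTop tendsto_const_nhds hlog).add_const _
  have hhi : Tendsto (fun m : ℕ => Real.log C / Real.log m + (e+1)) atTop (nhds (0 + (e+1))) :=
    (Tendsto.div_atTop tendsto_const_nhds hlog).add_const _
  rw [zero_add] at hlo hhi
  have hC : 0 < C := by
    obtain ⟨m, hm⟩ := (h.and (eventually_ge_atTop 1)).exists
    have hm0 : (0:ℝ) < m := by exact_mod_cast hm.2
    have h1 : (0:ℝ) < (m:ℝ)^(e+1) := by positivity
    nlinarith [hm.1.1.trans hm.1.2]
  apply tendsto_of_tendsto_of_tendsto_of_le_of_le' hlo hhi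
  · filter_upwards [h, eventually_ge_atTop 2] with m hm hm2
    have hm1 : (1:ℝ) < m := by exact_mod_cast hm2
    have hpow : (0:ℝ) < (m:ℝ)^(e+1) := by positivity
    have hGpos : 0 < G m := lt_of_lt_of_le (by positivity) hm.1
    have hlogm : 0 < Real.log m := Real.log_pos hm1
    have : Real.logb m (c * (m:ℝ)^(e+1)) ≤ Real.logb m (G m) :=
      Real.logb_le_logb_of_le hm1 (by positivity) hm.1
    refine le_trans (le_of_eq ?_) this
    rw [Real.logb, Real.log_mul (ne_of_gt hc) (ne_of_gt hpow), Real.log_pow]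
    push_cast
    field_simp
  · filter_upwards [h, eventually_ge_atTop 2] with m hm hm2
    have hm1 : (1:ℝ) < m := by exact_mod_cast hm2
    have hpow : (0:ℝ) < (m:ℝ)^(e+1) := by positivity
    have hGpos : 0 < G m := lt_of_lt_of_le (by positivity) hm.1
    have hlogm : 0 < Real.log m := Real.log_pos hm1
    have : Real.logb m (G m) ≤ Real.logb m (C * (m:ℝ)^(e+1)) :=
      Real.logb_le_logb_of_le hm1 hGpos hm.2
    refine le_trans this (le_of_eq ?_)
    rw [Real.logb, Real.log_mul (ne_of_gt hC) (ne_of_gt hpow), Real.log_pow]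
    push_cast
    field_simp


lemma auxGK_sum_bounds (h : ℕ → ℕ) (H : Polynomial ℚ) (d : ℕ) (hHdeg : H.degree = d)
    (hH : ∀ᶠ t : ℕ in atTop, (h t : ℚ) = H.eval (t : ℚ)) :
    ∃ c C : ℝ, 0 < c ∧ ∀ᶠ m : ℕ in atTop,
      c * (m:ℝ)^(d+1) ≤ (∑ t ∈ Finset.range (m+1), (h t : ℝ)) ∧
      (∑ t ∈ Finset.range (m+1), (h t : ℝ)) ≤ C * (m:ℝ)^(d+1) := by
  have hne : H ≠ 0 := fun hz => by simp [hz] at hHdeg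
  set Hr : Polynomial ℝ := H.map (Rat.castHom ℝ) with hHr
  have hdegr : Hr.degree = d := by
    rw [hHr, degree_map_eq_of_injective (Rat.castHom ℝ).injective, hHdeg]
  have hnatdeg : Hr.natDegree = d := natDegree_eq_of_degree_eq_some hdegr
  have hner : Hr ≠ 0 := fun hz => by simp [hz] at hdegr
  have heval : ∀ᶠ t : ℕ in atTop, (h t : ℝ) = Hr.eval (t : ℝ) := by
    filter_upwards [hH] with t ht
    have : Hr.eval ((t:ℚ):ℝ) = ((H.eval (t:ℚ) : ℚ) : ℝ) := by
      rw [hHr, eval_map]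
      exact eval₂_at_apply (Rat.castHom ℝ) (t:ℚ)
    rw [show ((t:ℝ)) = (((t:ℚ)):ℝ) by push_cast; ring, this, ← ht]
    push_cast; ring
  set lc : ℝ := Hr.leadingCoeff with hlc
  have hlcne : lc ≠ 0 := leadingCoeff_ne_zero.mpr hner
  have hbnd : ∀ᶠ x : ℝ in atTop,
      ‖Hr.eval x - lc * x ^ d‖ ≤ 1/2 * ‖lc * x ^ d‖ := by
    have := (Polynomial.isEquivalent_atTop_lead Hr)
    rw [IsEquivalent] at this
    have h2 := this.def (by norm_num : (0:ℝ) < 1/2)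
    simpa [hnatdeg] using h2
  have hbnd2 : ∀ᶠ x : ℝ in atTop,
      lc * x ^ d - |lc|/2 * x^d ≤ Hr.eval x ∧ Hr.eval x ≤ lc * x ^ d + |lc|/2 * x^d := by
    filter_upwards [hbnd, eventually_ge_atTop (0:ℝ)] with x hx hx0
    have hxp : (0:ℝ) ≤ x ^ d := by positivity
    rw [Real.norm_eq_abs, Real.norm_eq_abs, abs_mul, abs_pow, abs_of_nonneg hx0] at hx
    have := abs_le.mp hx
    constructor <;> nlinarith [this.1, this.2]
  have hnat : ∀ᶠ t : ℕ in atTop,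
      lc * (t:ℝ) ^ d - |lc|/2 * (t:ℝ)^d ≤ (h t : ℝ) ∧
      (h t:ℝ) ≤ lc * (t:ℝ) ^ d + |lc|/2 * (t:ℝ)^d := by
    filter_upwards [heval, tendsto_natCast_atTop_atTop.eventually hbnd2] with t h1 h2
    rw [h1]; exact h2
  have hlcpos : 0 < lc := by
    rcases lt_or_gt_of_ne hlcne with hneg | hpos
    · exfalso
      obtain ⟨t, ht1, ht2⟩ := (hnat.and (eventually_ge_atTop 1)).exists
      have ht0 : (1:ℝ) ≤ (t:ℝ) := by exact_mod_cast ht2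
      have htp : (1:ℝ) ≤ (t:ℝ)^d := one_le_pow₀ ht0
      have habs : |lc| = -lc := abs_of_neg hneg
      have hh0 : (0:ℝ) ≤ (h t : ℝ) := by positivity
      nlinarith [ht1.2]
    · exact hpos
  have habs : |lc| = lc := abs_of_pos hlcpos
  rw [habs] at hnat
  -- extract threshold
  obtain ⟨T, hT⟩ := eventually_atTop.mp hnat
  set K0 : ℝ := ∑ t ∈ Finset.range T, (h t : ℝ) with hK0
  have hK0nn : 0 ≤ K0 := Finset.sum_nonneg fun t _ => by positivity
  refine ⟨lc/(4*2^d), K0 + 3*lc, by positivity, ?_⟩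
  filter_upwards [eventually_ge_atTop (2*T + 2)] with m hm
  have hm1 : 1 ≤ m := by omega
  have hm1r : (1:ℝ) ≤ (m:ℝ) := by exact_mod_cast hm1
  have hmpos : (0:ℝ) < m := by linarith
  constructor
  · -- lower bound
    have hsub : Finset.Ico (m/2+1) (m+1) ⊆ Finset.range (m+1) := by
      intro t ht
      simp only [Finset.mem_Ico] at ht
      exact Finset.mem_range.mpr ht.2
    have hstep : (∑ t ∈ Finset.Ico (m/2+1) (m+1), (h t : ℝ)) ≤
        ∑ t ∈ Finset.range (m+1), (h t : ℝ) :=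
      Finset.sum_le_sum_of_subset_of_nonneg hsub (fun t _ _ => by positivity)
    set b : ℝ := lc/2 * ((m:ℝ)/2)^d with hb
    have hbnn : 0 ≤ b := by positivity
    have hterm : ∀ t ∈ Finset.Ico (m/2+1) (m+1), b ≤ (h t : ℝ) := by
      intro t ht
      simp only [Finset.mem_Ico] at ht
      have htT : T ≤ t := by omega
      have hcast : (m:ℝ)/2 ≤ (t:ℝ) := by
        have h2 : m ≤ 2 * (m/2) + 1 := by omega
        have h3 : m/2 + 1 ≤ t := ht.1
        have : (m:ℝ) ≤ 2*((m/2 : ℕ):ℝ) + 1 := by exact_mod_cast h2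
        have h4 : ((m/2:ℕ):ℝ) + 1 ≤ (t:ℝ) := by exact_mod_cast h3
        linarith
      have hpow : ((m:ℝ)/2)^d ≤ (t:ℝ)^d :=
        pow_le_pow_left₀ (by positivity) hcast d
      have := (hT t htT).1
      calc b = lc/2 * ((m:ℝ)/2)^d := rfl
        _ ≤ lc/2 * (t:ℝ)^d := by nlinarith
        _ = lc * (t:ℝ)^d - lc/2 * (t:ℝ)^d := by ring
        _ ≤ (h t : ℝ) := this
    have hcard : ((Finset.Ico (m/2+1) (m+1)).card : ℝ) ≥ (m:ℝ)/2 := by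
      rw [Nat.card_Ico]
      have h5 : m + 1 - (m/2+1) = m - m/2 := by omega
      rw [h5]
      rw [Nat.cast_sub (Nat.div_le_self m 2)]
      have := Nat.cast_div_le (α := ℝ) (m := m) (n := 2)
      push_cast at this ⊢
      linarith
    have hlow : ((Finset.Ico (m/2+1) (m+1)).card : ℝ) * b ≤
        ∑ t ∈ Finset.Ico (m/2+1) (m+1), (h t : ℝ) := by
      have := Finset.card_nsmul_le_sum (Finset.Ico (m/2+1) (m+1)) (fun t => (h t : ℝ)) b hterm
      simpa [nsmul_eq_mul] using this
    have key : lc/(4*2^d) * (m:ℝ)^(d+1) ≤ ((Finset.Ico (m/2+1) (m+1)).card : ℝ) * b := by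
      have heq : (m:ℝ)/2 * b = lc/(4*2^d) * (m:ℝ)^(d+1) := by
        rw [hb, div_pow]
        ring
      rw [← heq]
      nlinarith
    linarith
  · -- upper bound
    have hsplit : ∑ t ∈ Finset.range (m+1), (h t : ℝ) =
        K0 + ∑ t ∈ Finset.Ico T (m+1), (h t : ℝ) := by
      rw [hK0, Finset.range_eq_Ico, Finset.range_eq_Ico]
      exact (Finset.sum_Ico_consecutive (fun t => (h t : ℝ)) (Nat.zero_le T) (show T ≤ m + 1 by omega)).symm
    have hterm : ∀ t ∈ Finset.Ico T (m+1), (h t : ℝ) ≤ 3*lc/2 * (m:ℝ)^d := by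
      intro t ht
      simp only [Finset.mem_Ico] at ht
      have h1 := (hT t ht.1).2
      have hle : (t:ℝ) ≤ (m:ℝ) := by exact_mod_cast Nat.lt_succ_iff.mp ht.2
      have hpow : (t:ℝ)^d ≤ (m:ℝ)^d := pow_le_pow_left₀ (by positivity) hle d
      nlinarith
    have hsum : ∑ t ∈ Finset.Ico T (m+1), (h t : ℝ) ≤
        ((Finset.Ico T (m+1)).card : ℝ) * (3*lc/2 * (m:ℝ)^d) := by
      have := Finset.sum_le_card_nsmul (Finset.Ico T (m+1)) (fun t => (h t : ℝ)) _ hterm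
      simpa [nsmul_eq_mul] using this
    have hcard : ((Finset.Ico T (m+1)).card : ℝ) ≤ 2*(m:ℝ) := by
      rw [Nat.card_Ico]
      have : ((m + 1 - T : ℕ):ℝ) ≤ (m:ℝ) + 1 := by
        have : m + 1 - T ≤ m + 1 := by omega
        exact_mod_cast this
      linarith
    have hpowd : (0:ℝ) ≤ (m:ℝ)^d := by positivity
    have hK0le : K0 ≤ K0 * (m:ℝ)^(d+1) := by
      have : (1:ℝ) ≤ (m:ℝ)^(d+1) := one_le_pow₀ hm1r
      nlinarith
    have h8 : ((Finset.Ico T (m+1)).card : ℝ) * (3*lc/2 * (m:ℝ)^d) ≤ 3*lc * (m:ℝ)^(d+1) := by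
      have h7 : 2*(m:ℝ) * (3*lc/2 * (m:ℝ)^d) = 3*lc * (m:ℝ)^(d+1) := by
        rw [pow_succ]; ring
      have hb0 : (0:ℝ) ≤ 3*lc/2 * (m:ℝ)^d := by positivity
      nlinarith
    have hexp : (K0 + 3*lc)*(m:ℝ)^(d+1) = K0*(m:ℝ)^(d+1) + 3*lc*(m:ℝ)^(d+1) := by ring
    rw [hsplit]
    linarith

end anal
end helper

/-- (GK dimension of induced modules, polynomial case.)  Let `K = k[x₁,…,x_n]`, `δ` a
`k`-derivation of `K` with `δ(x_i) ∈ k·x_i + k`, and `R = K[x; δ]` the Ore extension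
(modeled by `φ : K → R` and `x ∈ R` with `x·f = f·x + δ(f)`).  Let `M` be a right
`R`-module that is induced from a finitely generated `K`-submodule `N` (generated by
`g 0, …, g (p-1)`), i.e. `M = ⊕_{i≥0} N·x^i` freely.  If the Hilbert function of the
standard filtration of `N` is eventually a polynomial `H` of degree `d`, then the induced
module `N ⊗_K R = M` has GK dimension `d + 1`, GK dimension being `limsup_m log_m` of the
standard filtration dimensions. -/
theorem gkDim_induced_module_polynomial
    (k : Type*) [Field k] (n : ℕ)
    (R : Type*) [Ring R] [Algebra k R]
    (φ : MvPolynomial (Fin n) k →ₐ[k] R) (x : R)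
    (δ : Derivation k (MvPolynomial (Fin n) k) (MvPolynomial (Fin n) k))
    -- `δ(x_i) ∈ k·x_i + k` :
    (hδ : ∀ i : Fin n, ∃ a b : k,
      δ (MvPolynomial.X i) = MvPolynomial.C a * MvPolynomial.X i + MvPolynomial.C b)
    -- Ore extension commutation rule `x·f = f·x + δ(f)` :
    (hcomm : ∀ f : MvPolynomial (Fin n) k, x * φ f = φ f * x + φ (δ f))
    (M : Type*) [AddCommGroup M] [Module Rᵐᵒᵖ M] [Module k M]
    (hcompk : ∀ (a : k) (m : M), a • m = op (algebraMap k R a) • m)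
    -- `N` is the `K`-submodule generated by `g 0, …, g (p-1)` :
    (p : ℕ) (g : Fin p → M)
    (NS : Submodule k M)
    (hNS : NS = Submodule.span k {y : M | ∃ c : MvPolynomial (Fin n) k, ∃ j : Fin p,
      y = op (φ c) • g j})
    -- `M` is spanned by the `N·x^i` :
    (hgen : ∀ m : M, ∃ s : Finset ℕ, ∃ ν : ℕ → M, (∀ i, ν i ∈ NS) ∧
      m = ∑ i ∈ s, op (x ^ i) • ν i)
    -- and the sum `∑ N·x^i` is direct, i.e. `M ≅ N ⊗_K R` :
    (hfree : ∀ (s : Finset ℕ) (ν : ℕ → M), (∀ i, ν i ∈ NS) →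
      (∑ i ∈ s, op (x ^ i) • ν i) = 0 → ∀ i ∈ s, ν i = 0)
    -- generating subspace of `K` spanned by `1` and the `x_i` :
    (V : Submodule k (MvPolynomial (Fin n) k))
    (hV : V = Submodule.span k (insert 1 (Set.range (MvPolynomial.X : Fin n →
      MvPolynomial (Fin n) k))))
    -- generating subspace of `R` spanned by the `x_i` and `x` :
    (W : Submodule k R) (hW : W = V.map φ.toLinearMap ⊔ Submodule.span k {x})
    -- the Hilbert function of the standard filtration of `N` is eventually a polynomial
    -- `H` of degree `d` :
    (H : Polynomial ℚ) (d : ℕ) (hHdeg : H.degree = d)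
    (hH : ∀ᶠ m : ℕ in atTop,
      (Module.finrank k (Submodule.span k
        {y : M | ∃ c ∈ (V ^ m : Submodule k (MvPolynomial (Fin n) k)), ∃ j : Fin p,
          y = op (φ c) • g j}) : ℚ) = H.eval (m : ℚ)) :
    Filter.limsup (fun m : ℕ => Real.logb m
        (Module.finrank k (Submodule.span k
          {y : M | ∃ r ∈ (W ^ m : Submodule k R), ∃ j : Fin p, y = op r • g j})))
      atTop = (d + 1 : ℝ) := by
  classical
  -- linear maps
  let L : Fin p → R →ₗ[k] M := fun j =>
    { toFun := fun r => op r • g j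
      map_add' := fun r s => by simp only [op_add, add_smul]
      map_smul' := fun a r => by
        simp only [RingHom.id_apply]
        rw [Algebra.smul_def, Algebra.commutes, op_mul, mul_smul, ← hcompk] }
  let μ : ℕ → M →ₗ[k] M := fun i =>
    { toFun := fun y => op (x ^ i) • y
      map_add' := fun y z => smul_add _ _ _
      map_smul' := fun a y => by
        simp only [RingHom.id_apply]
        rw [hcompk a y, ← mul_smul, ← op_mul, Algebra.commutes a (x ^ i), op_mul,
          mul_smul, ← hcompk] }
  let P : Fin p → (MvPolynomial (Fin n) k) →ₗ[k] M := fun j => (L j).comp φ.toLinearMap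
  let ρ : ℕ → (MvPolynomial (Fin n) k) →ₗ[k] R := fun i => (LinearMap.mulRight k (x ^ i)).comp φ.toLinearMap
  have hρ : ∀ i c, ρ i c = φ c * x ^ i := fun i c => rfl
  have hL : ∀ j r, L j r = op r • g j := fun j r => rfl
  have hμ : ∀ i y, μ i y = op (x ^ i) • y := fun i y => rfl
  have hP : ∀ j c, P j c = op (φ c) • g j := fun j c => rfl
  let Nsub : ℕ → Submodule k M := fun s => ⨆ j : Fin p, (V ^ s).map (P j)
  let B : ℕ → ℕ → Submodule k R := fun t i => (V ^ t).map (ρ i)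
  let D : ℕ → ℕ → Submodule k M := fun m i => (Nsub (m - i)).map (μ i)
  -- span descriptions
  have hspanW : ∀ m : ℕ, Submodule.span k
      {y : M | ∃ r ∈ (W ^ m : Submodule k R), ∃ j : Fin p, y = op r • g j}
      = ⨆ j : Fin p, (W ^ m).map (L j) := by
    intro m
    apply le_antisymm
    · rw [Submodule.span_le]
      rintro y ⟨r, hr, j, rfl⟩
      exact Submodule.mem_iSup_of_mem j ⟨r, hr, rfl⟩
    · refine iSup_le fun j => ?_
      intro y hy
      obtain ⟨r, hr, rfl⟩ := Submodule.mem_map.mp hy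
      exact Submodule.subset_span ⟨r, hr, j, rfl⟩
  have hspanN : ∀ m : ℕ, Submodule.span k
      {y : M | ∃ c ∈ (V ^ m : Submodule k (MvPolynomial (Fin n) k)), ∃ j : Fin p, y = op (φ c) • g j}
      = Nsub m := by
    intro m
    apply le_antisymm
    · rw [Submodule.span_le]
      rintro y ⟨c, hc, j, rfl⟩
      exact Submodule.mem_iSup_of_mem j ⟨c, hc, rfl⟩
    · refine iSup_le fun j => ?_
      intro y hy
      obtain ⟨c, hc, rfl⟩ := Submodule.mem_map.mp hy
      exact Submodule.subset_span ⟨c, hc, j, rfl⟩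
  -- derivation stability
  have h1V : (1 : (MvPolynomial (Fin n) k)) ∈ V := by
    rw [hV]; exact Submodule.subset_span (Set.mem_insert 1 _)
  have hδV : ∀ f ∈ V, δ f ∈ V := by
    intro f hf
    rw [hV] at hf
    induction hf using Submodule.span_induction with
    | mem z hz =>
      obtain rfl | ⟨i, rfl⟩ := hz
      · rw [Derivation.map_one_eq_zero]; exact zero_mem V
      · obtain ⟨a, b, hab⟩ := hδ i
        rw [hab]
        have hX : MvPolynomial.X i ∈ V := by
          rw [hV]; exact Submodule.subset_span (Set.mem_insert_of_mem _ ⟨i, rfl⟩)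
        refine add_mem ?_ ?_
        · rw [MvPolynomial.C_mul']; exact Submodule.smul_mem _ _ hX
        · rw [show (MvPolynomial.C b : (MvPolynomial (Fin n) k)) = b • 1 by
            rw [MvPolynomial.smul_eq_C_mul, mul_one]]
          exact Submodule.smul_mem _ _ h1V
    | zero => rw [map_zero]; exact zero_mem V
    | add u v _ _ hu hv => rw [map_add]; exact add_mem hu hv
    | smul a u _ hu => rw [Derivation.map_smul]; exact Submodule.smul_mem _ _ hu
  have hδVpow : ∀ s : ℕ, ∀ f ∈ (V ^ s : Submodule k (MvPolynomial (Fin n) k)), δ f ∈ (V ^ s : Submodule k (MvPolynomial (Fin n) k)) := by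
    intro s
    induction s with
    | zero =>
      intro f hf
      rw [pow_zero] at hf ⊢
      obtain ⟨y, rfl⟩ := Submodule.mem_one.mp hf
      rw [Derivation.map_algebraMap]
      exact zero_mem _
    | succ s ih =>
      intro f hf
      rw [pow_succ] at hf ⊢
      refine Submodule.mul_induction_on hf ?_ ?_
      · intro a ha b hb
        rw [Derivation.leibniz, smul_eq_mul, smul_eq_mul]
        refine add_mem (Submodule.mul_mem_mul ha (hδV b hb)) ?_
        rw [mul_comm b (δ a)]
        exact Submodule.mul_mem_mul (ih a ha) hb
      · intro u v hu hv
        rw [map_add]; exact add_mem hu hv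
  -- basic facts
  have h1W : (1 : Submodule k R) ≤ W := by
    rw [Submodule.one_le, hW]
    exact Submodule.mem_sup_left ⟨1, h1V, map_one φ⟩
  have hxW : x ∈ W := by
    rw [hW]; exact Submodule.mem_sup_right (Submodule.mem_span_singleton_self x)
  have hVmono : ∀ {a b : ℕ}, a ≤ b → (V ^ a : Submodule k (MvPolynomial (Fin n) k)) ≤ V ^ b := by
    intro a b hab
    exact auxGK_pow_le_pow (Submodule.one_le.mpr (by
      rw [hV]; exact Submodule.subset_span (Set.mem_insert 1 _))) hab
  -- the structure of W ^ m
  have hWm : ∀ m : ℕ, (W ^ m : Submodule k R)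
      = ⨆ q : ℕ × ℕ, ⨆ _ : q.1 + q.2 ≤ m, B q.1 q.2 := by
    have hle : ∀ (m' : ℕ) (q : ℕ × ℕ), q.1 + q.2 ≤ m' →
        B q.1 q.2 ≤ ⨆ q : ℕ × ℕ, ⨆ _ : q.1 + q.2 ≤ m', B q.1 q.2 :=
      fun m' q hq => le_iSup_of_le q (le_iSup_of_le hq le_rfl)
    have hmap_bound : ∀ (f : R →ₗ[k] R) (m' : ℕ) (Tgt : Submodule k R),
        (∀ q : ℕ × ℕ, q.1 + q.2 ≤ m' → (B q.1 q.2).map f ≤ Tgt) →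
        ∀ y ∈ (⨆ q : ℕ × ℕ, ⨆ _ : q.1 + q.2 ≤ m', B q.1 q.2), f y ∈ Tgt := by
      intro f m' Tgt hb y hy
      have hmle : Submodule.map f (⨆ q : ℕ × ℕ, ⨆ _ : q.1 + q.2 ≤ m', B q.1 q.2) ≤ Tgt := by
        rw [Submodule.map_iSup]
        refine iSup_le fun q => ?_
        rw [Submodule.map_iSup]
        exact iSup_le fun hq => hb q hq
      exact hmle (Submodule.mem_map_of_mem hy)
    intro m
    apply le_antisymm
    · -- W ^ m ≤ ⨆ B
      induction m with
      | zero =>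
        rw [pow_zero]
        intro z hz
        obtain ⟨y0, rfl⟩ := Submodule.mem_one.mp hz
        refine hle 0 (0, 0) le_rfl ?_
        refine ⟨MvPolynomial.C y0, ?_, ?_⟩
        · rw [pow_zero]
          exact Submodule.mem_one.mpr ⟨y0, by rw [MvPolynomial.algebraMap_eq]⟩
        · rw [hρ, pow_zero, mul_one, ← MvPolynomial.algebraMap_eq, AlgHom.commutes]
      | succ m ih =>
        rw [pow_succ']
        refine Submodule.mul_le.mpr fun w hw y hy => ?_
        have hy' : y ∈ ⨆ q : ℕ × ℕ, ⨆ _ : q.1 + q.2 ≤ m, B q.1 q.2 := ih hy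
        rw [hW] at hw
        obtain ⟨u, hu, v, hv, rfl⟩ := Submodule.mem_sup.mp hw
        obtain ⟨u', hu', rfl⟩ := Submodule.mem_map.mp hu
        obtain ⟨a, rfl⟩ := Submodule.mem_span_singleton.mp hv
        have heq : (φ.toLinearMap u' + a • x) * y = φ.toLinearMap u' * y + a • (x * y) := by
          rw [add_mul, smul_mul_assoc]
        rw [heq]
        refine add_mem ?_ (Submodule.smul_mem _ _ ?_)
        · -- φ u' * y
          have hb : ∀ q : ℕ × ℕ, q.1 + q.2 ≤ m →
              (B q.1 q.2).map (LinearMap.mulLeft k (φ u')) ≤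
              ⨆ q : ℕ × ℕ, ⨆ _ : q.1 + q.2 ≤ m + 1, B q.1 q.2 := by
            intro q hq
            intro z hz
            obtain ⟨z', hz', rfl⟩ := Submodule.mem_map.mp hz
            obtain ⟨c, hc, rfl⟩ := Submodule.mem_map.mp hz'
            refine hle (m+1) (q.1 + 1, q.2) (by omega) ?_
            refine ⟨u' * c, ?_, ?_⟩
            · rw [pow_succ']
              exact Submodule.mul_mem_mul hu' hc
            · rw [hρ, hρ, LinearMap.mulLeft_apply, map_mul, mul_assoc]
          exact hmap_bound (LinearMap.mulLeft k (φ u')) m _ hb y hy'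
        · -- x * y
          have hb : ∀ q : ℕ × ℕ, q.1 + q.2 ≤ m →
              (B q.1 q.2).map (LinearMap.mulLeft k x) ≤
              ⨆ q : ℕ × ℕ, ⨆ _ : q.1 + q.2 ≤ m + 1, B q.1 q.2 := by
            intro q hq
            intro z hz
            obtain ⟨z', hz', rfl⟩ := Submodule.mem_map.mp hz
            obtain ⟨c, hc, rfl⟩ := Submodule.mem_map.mp hz'
            have hcalc : LinearMap.mulLeft k x (ρ q.2 c) =
                ρ (q.2 + 1) c + ρ q.2 (δ c) := by
              rw [LinearMap.mulLeft_apply, hρ, hρ, hρ, ← mul_assoc, hcomm c, add_mul,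
                mul_assoc, ← pow_succ']
            rw [hcalc]
            refine add_mem ?_ ?_
            · exact hle (m+1) (q.1, q.2 + 1) (by omega) ⟨c, hc, rfl⟩
            · exact hle (m+1) (q.1, q.2) (by omega) ⟨δ c, hδVpow q.1 c hc, rfl⟩
          exact hmap_bound (LinearMap.mulLeft k x) m _ hb y hy'
    · -- ⨆ B ≤ W ^ m
      refine iSup_le fun q => iSup_le fun hq => ?_
      intro z hz
      obtain ⟨c, hc, rfl⟩ := Submodule.mem_map.mp hz
      rw [hρ]
      have h1 : φ c ∈ (W ^ q.1 : Submodule k R) := by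
        have hmem : φ c ∈ (V.map φ.toLinearMap) ^ q.1 := by
          rw [← Submodule.map_pow]
          exact ⟨c, hc, rfl⟩
        exact auxGK_pow_mono (hW ▸ le_sup_left) q.1 hmem
      have h2 : x ^ q.2 ∈ (W ^ q.2 : Submodule k R) := Submodule.pow_mem_pow W hxW q.2
      have h3 : φ c * x ^ q.2 ∈ (W ^ (q.1 + q.2) : Submodule k R) := by
        rw [pow_add]
        exact Submodule.mul_mem_mul h1 h2
      exact auxGK_pow_le_pow h1W hq h3
  -- the structure of the filtration of M
  have hFm : ∀ m : ℕ, (⨆ j : Fin p, (W ^ m).map (L j))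
      = ⨆ i ∈ Finset.range (m+1), D m i := by
    intro m
    have hcomp : ∀ (j : Fin p) (t i : ℕ), (B t i).map (L j) = ((V ^ t).map (P j)).map (μ i) := by
      intro j t i
      rw [show B t i = (V ^ t).map (ρ i) from rfl, ← Submodule.map_comp, ← Submodule.map_comp]
      congr 1
      refine LinearMap.ext fun c => ?_
      show L j (ρ i c) = μ i (P j c)
      rw [hL, hρ, hμ, hP, op_mul, mul_smul]
    apply le_antisymm
    · refine iSup_le fun j => ?_
      rw [hWm m, Submodule.map_iSup]
      refine iSup_le fun q => ?_
      rw [Submodule.map_iSup]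
      refine iSup_le fun hq => ?_
      rw [hcomp j q.1 q.2]
      have h1 : ((V ^ q.1).map (P j)).map (μ q.2) ≤ (Nsub (m - q.2)).map (μ q.2) := by
        apply Submodule.map_mono
        refine le_trans (Submodule.map_mono (hVmono (show q.1 ≤ m - q.2 by omega))) ?_
        exact le_iSup (fun j => (V ^ (m - q.2)).map (P j)) j
      refine le_trans h1 ?_
      exact le_iSup_of_le q.2 (le_iSup_of_le (Finset.mem_range.mpr (by omega)) le_rfl)
    · refine iSup_le fun i => iSup_le fun hi => ?_
      have hi' : i ≤ m := by
        have := Finset.mem_range.mp hi; omega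
      rw [show D m i = (Nsub (m - i)).map (μ i) from rfl,
        show Nsub (m - i) = ⨆ j : Fin p, (V ^ (m - i)).map (P j) from rfl,
        Submodule.map_iSup]
      refine iSup_le fun j => ?_
      rw [← hcomp j (m - i) i]
      refine le_trans (Submodule.map_mono ?_) (le_iSup (fun j => (W ^ m).map (L j)) j)
      rw [hWm m]
      exact le_iSup_of_le (m - i, i) (le_iSup_of_le (show (m - i) + i ≤ m by omega) le_rfl)
  -- finite dimensionality
  have hfdV : ∀ s : ℕ, FiniteDimensional k (V ^ s : Submodule k (MvPolynomial (Fin n) k)) := by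
    have hspan : ∀ s : ℕ, ∃ S : Set (MvPolynomial (Fin n) k), S.Finite ∧ (V ^ s : Submodule k (MvPolynomial (Fin n) k)) = Submodule.span k S := by
      intro s
      induction s with
      | zero =>
        exact ⟨{1}, Set.finite_singleton 1, by rw [pow_zero, Submodule.one_eq_span]⟩
      | succ s ih =>
        obtain ⟨S, hSfin, hS⟩ := ih
        refine ⟨S * (insert 1 (Set.range MvPolynomial.X) : Set (MvPolynomial (Fin n) k)),
          hSfin.mul (((Set.finite_range _).insert 1)), ?_⟩
        rw [pow_succ, hS, hV, Submodule.span_mul_span]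
    intro s
    obtain ⟨S, h1, h2⟩ := hspan s
    rw [h2]
    exact FiniteDimensional.span_of_finite k h1
  have hfdN : ∀ s : ℕ, FiniteDimensional k (Nsub s) := by
    intro s
    haveI := hfdV s
    haveI : ∀ j : Fin p, FiniteDimensional k ((V ^ s).map (P j)) :=
      fun j => Module.Finite.map _ _
    exact Submodule.finiteDimensional_iSup _
  have hfdD : ∀ m i : ℕ, FiniteDimensional k (D m i) := by
    intro m i
    haveI := hfdN (m - i)
    exact Module.Finite.map _ _
  -- N sub s ≤ NS
  have hNle : ∀ s : ℕ, Nsub s ≤ NS := by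
    intro s
    refine iSup_le fun j => ?_
    rintro y ⟨c, hc, rfl⟩
    rw [hNS]
    exact Submodule.subset_span ⟨c, j, rfl⟩
  -- injectivity
  have hinj : ∀ (i : ℕ) (ν : M), ν ∈ NS → μ i ν = 0 → ν = 0 := by
    intro i ν hν h0
    refine hfree {i} (fun _ => ν) (fun _ => hν) ?_ i (Finset.mem_singleton_self i)
    rw [Finset.sum_singleton]; exact h0
  have hrankD : ∀ m i : ℕ, Module.finrank k (D m i) = Module.finrank k (Nsub (m - i)) := by
    intro m i
    haveI := hfdN (m - i)
    set f : Nsub (m - i) →ₗ[k] M := (μ i).comp (Nsub (m - i)).subtype with hfdef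
    have hfinj : Function.Injective f := by
      rw [← LinearMap.ker_eq_bot, LinearMap.ker_eq_bot']
      rintro ⟨ν, hν⟩ h0
      have hz : ν = 0 := hinj i ν (hNle _ hν) h0
      exact Subtype.ext hz
    have hr : LinearMap.range f = D m i := by
      rw [hfdef, LinearMap.range_comp, Submodule.range_subtype]
    rw [← hr]
    exact LinearMap.finrank_range_of_inj hfinj
  -- independence
  have hdisj : ∀ (m a : ℕ) (s : Finset ℕ), a ∉ s →
      D m a ⊓ (⨆ i ∈ s, D m i) = ⊥ := by
    intro m a s ha
    rw [eq_bot_iff]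
    intro y hy
    obtain ⟨hy1, hy2⟩ := Submodule.mem_inf.mp hy
    obtain ⟨νa, hνa, hya⟩ := Submodule.mem_map.mp hy1
    obtain ⟨μf, hsum⟩ := (Submodule.mem_iSup_finset_iff_exists_sum (fun i => D m i) y).mp hy2
    choose w hw1 hw2 using fun i => Submodule.mem_map.mp (μf i).2
    set ww : ℕ → M := fun i => if i = a then -νa else if i ∈ s then w i else 0 with hww
    have hwwNS : ∀ i, ww i ∈ NS := by
      intro i
      rw [hww]
      dsimp only
      split_ifs with h1 h2
      · exact neg_mem (hNle _ hνa)
      · exact hNle _ (hw1 i)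
      · exact zero_mem NS
    have hsum0 : ∑ i ∈ insert a s, op (x ^ i) • ww i = 0 := by
      rw [Finset.sum_insert ha]
      have h1 : op (x ^ a) • ww a = -y := by
        rw [hww]
        dsimp only
        rw [if_pos rfl, smul_neg, show op (x ^ a) • νa = μ a νa from rfl, hya]
      have h2 : ∑ i ∈ s, op (x ^ i) • ww i = y := by
        rw [← hsum]
        refine Finset.sum_congr rfl fun i hi => ?_
        have hia : i ≠ a := fun h => ha (h ▸ hi)
        rw [hww]
        dsimp only
        rw [if_neg hia, if_pos hi, show op (x ^ i) • w i = μ i (w i) from rfl, hw2]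
      rw [h1, h2, neg_add_cancel]
    have hwa := hfree (insert a s) ww hwwNS hsum0 a (Finset.mem_insert_self a s)
    rw [hww] at hwa
    dsimp only at hwa
    rw [if_pos rfl] at hwa
    have hν0 : νa = 0 := neg_eq_zero.mp hwa
    rw [Submodule.mem_bot, ← hya, hν0, map_zero]
  have hrank : ∀ (m : ℕ) (s : Finset ℕ),
      Module.finrank k (⨆ i ∈ s, D m i : Submodule k M) = ∑ i ∈ s, Module.finrank k (D m i) := by
    intro m s
    induction s using Finset.induction_on with
    | empty =>
      rw [show (⨆ i ∈ (∅ : Finset ℕ), D m i) = ⊥ by simp, Finset.sum_empty]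
      exact finrank_bot k M
    | @insert a s' ha ih =>
      rw [Finset.iSup_insert, Finset.sum_insert ha, ← ih]
      haveI : FiniteDimensional k (D m a) := hfdD m a
      haveI : FiniteDimensional k (⨆ i ∈ s', D m i : Submodule k M) := by
        have he : (⨆ i ∈ s', D m i : Submodule k M)
            = ⨆ i : {i : ℕ // i ∈ s'}, D m (i : ℕ) := by
          rw [iSup_subtype]
        rw [he]
        exact Submodule.finiteDimensional_iSup _
      have hkey := Submodule.finrank_sup_add_finrank_inf_eq (D m a) (⨆ i ∈ s', D m i)
      rw [hdisj m a s' ha, finrank_bot, add_zero] at hkey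
      exact hkey
  -- Hilbert function
  set hfun : ℕ → ℕ := fun s => Module.finrank k (Nsub s) with hhfun
  have hdim : ∀ m : ℕ, Module.finrank k (Submodule.span k
      {y : M | ∃ r ∈ (W ^ m : Submodule k R), ∃ j : Fin p, y = op r • g j})
      = ∑ t ∈ Finset.range (m+1), hfun t := by
    intro m
    rw [hspanW m, hFm m, hrank m (Finset.range (m+1))]
    rw [Finset.sum_congr rfl (fun i _ => hrankD m i)]
    have h := Finset.sum_range_reflect (fun t => hfun t) (m+1)
    simp only [Nat.add_sub_cancel] at h
    exact h
  have hH' : ∀ᶠ t : ℕ in atTop, ((hfun t : ℕ) : ℚ) = H.eval (t : ℚ) := by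
    filter_upwards [hH] with t ht
    rw [hspanN t] at ht
    exact ht
  obtain ⟨c, C, hc, hbounds⟩ := auxGK_sum_bounds hfun H d hHdeg hH'
  have hbounds' : ∀ᶠ m : ℕ in atTop,
      c * (m:ℝ)^(d+1) ≤ ((∑ t ∈ Finset.range (m+1), hfun t : ℕ) : ℝ) ∧
      ((∑ t ∈ Finset.range (m+1), hfun t : ℕ) : ℝ) ≤ C * (m:ℝ)^(d+1) := by
    filter_upwards [hbounds] with m hm
    rw [Nat.cast_sum]
    exact hm
  have htend := auxGK_logb_tendsto
    (fun m => ((∑ t ∈ Finset.range (m+1), hfun t : ℕ) : ℝ)) c C hc d hbounds'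
  have hfeq : (fun m : ℕ => Real.logb m
      (Module.finrank k (Submodule.span k
        {y : M | ∃ r ∈ (W ^ m : Submodule k R), ∃ j : Fin p, y = op r • g j})))
      = fun m : ℕ => Real.logb m ((∑ t ∈ Finset.range (m+1), hfun t : ℕ) : ℝ) := by
    funext m
    rw [hdim m]
  rw [hfeq]
  exact htend.limsup_eq
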